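/- arXiv:1008.3241 — 2 statements merged into one kernel-verified Lean document; each statement's English description precedes it below -/
import Mathlib

section
/- If a semigroup S is a left I-order in a bisimple inverse ω-semigroup Q, then S is a straight left I-order in Q: every element of Q can be written as a⁻¹b with a, b ∈ S and a 𝓡 b in Q. -/
/-- Green's relation `𝓡`. -/
def GreenR {Q : Type*} [Mul Q] (a b : Q) : Prop :=
  a = b ∨ ∃ x y : Q, a * x = b ∧ b * y = a

/-- Green's relation `𝓛`. -/
def GreenL {Q : Type*} [Mul Q] (a b : Q) : Prop :=
  a = b ∨ ∃ x y : Q, x * a = b ∧ y * b = a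

/-- Green's relation `𝓓`. -/
def GreenD {Q : Type*} [Mul Q] (a b : Q) : Prop :=
  ∃ c : Q, GreenR a c ∧ GreenL c b

/-- `Q` is an inverse semigroup with inverse map `inv`: every `q` has `inv q` as its
unique (semigroup-theoretic) inverse. -/
def IsInverseSg (Q : Type*) [Mul Q] (inv : Q → Q) : Prop :=
  ∀ q : Q, (q * inv q * q = q ∧ inv q * q * inv q = inv q) ∧
    ∀ x : Q, q * x * q = q → x * q * x = x → x = inv q

/-- `Q` is bisimple: any two elements are `𝓓`-related. -/
def IsBisimple (Q : Type*) [Mul Q] : Prop := ∀ a b : Q, GreenD a b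

/-- The idempotents of `Q` are exactly `e 0 > e 1 > e 2 > ⋯`, an ω-chain
(ordering `e ≤ f ↔ e * f = f * e = e`). -/
def IsOmegaChain (Q : Type*) [Mul Q] (e : ℕ → Q) : Prop :=
  (∀ n, e n * e n = e n) ∧
  (∀ q : Q, q * q = q → ∃ n, q = e n) ∧
  (∀ n, e (n + 1) * e n = e (n + 1) ∧ e n * e (n + 1) = e (n + 1)) ∧
  Function.Injective e

/-- `T` is a left I-order in `Q` (with inverse map `inv`): every element of `Q` is
of the form `inv a * b` with `a, b ∈ T`. -/
def IsLeftIOrder {Q : Type*} [Mul Q] (inv : Q → Q) (T : Set Q) : Prop :=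
  ∀ q : Q, ∃ a ∈ T, ∃ b ∈ T, q = inv a * b

section Aux

variable {Q : Type*} [Semigroup Q] {inv : Q → Q}

theorem aux_tri (hinv : IsInverseSg Q inv) (q : Q) : q * inv q * q = q := (hinv q).1.1

theorem aux_tri' (hinv : IsInverseSg Q inv) (q : Q) : inv q * q * inv q = inv q := (hinv q).1.2

theorem aux_uniq (hinv : IsInverseSg Q inv) {t x : Q} (h1 : t * x * t = t) (h2 : x * t * x = x) :
    x = inv t := (hinv t).2 x h1 h2

theorem aux_inv_inv (hinv : IsInverseSg Q inv) (q : Q) : inv (inv q) = q :=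
  (aux_uniq hinv (aux_tri' hinv q) (aux_tri hinv q)).symm

theorem aux_idem_inv (hinv : IsInverseSg Q inv) {p : Q} (hp : p * p = p) : inv p = p :=
  (aux_uniq hinv (by rw [hp, hp]) (by rw [hp, hp])).symm

theorem aux_mii (hinv : IsInverseSg Q inv) (a : Q) : (a * inv a) * (a * inv a) = a * inv a := by
  calc (a * inv a) * (a * inv a) = (a * inv a * a) * inv a := by simp only [mul_assoc]
    _ = a * inv a := by rw [aux_tri hinv a]

theorem aux_imi (hinv : IsInverseSg Q inv) (a : Q) : (inv a * a) * (inv a * a) = inv a * a := by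
  calc (inv a * a) * (inv a * a) = (inv a * a * inv a) * a := by simp only [mul_assoc]
    _ = inv a * a := by rw [aux_tri' hinv a]

theorem aux_idem_mul (hinv : IsInverseSg Q inv) {p q : Q} (hp : p * p = p) (hq : q * q = q) :
    (p * q) * (p * q) = p * q := by
  set g := inv (p * q) with hg
  have tri2 : g * (p * q) * g = g := aux_tri' hinv (p * q)
  have hidem : (q * g * p) * (q * g * p) = q * g * p := by
    calc (q * g * p) * (q * g * p) = q * (g * (p * q) * g) * p := by simp only [mul_assoc]
      _ = q * g * p := by rw [tri2]
  have hinv1 : (p * q) * (q * g * p) * (p * q) = p * q := by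
    calc (p * q) * (q * g * p) * (p * q) = p * ((q * q) * (g * ((p * p) * q))) := by
          simp only [mul_assoc]
      _ = p * (q * (g * (p * q))) := by rw [hq, hp]
      _ = (p * q) * g * (p * q) := by simp only [mul_assoc]
      _ = p * q := aux_tri hinv (p * q)
  have hinv2 : (q * g * p) * (p * q) * (q * g * p) = q * g * p := by
    calc (q * g * p) * (p * q) * (q * g * p)
        = q * (g * ((p * p) * ((q * q) * (g * p)))) := by simp only [mul_assoc]
      _ = q * (g * (p * (q * (g * p)))) := by rw [hp, hq]
      _ = q * (g * (p * q) * g) * p := by simp only [mul_assoc]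
      _ = q * g * p := by rw [tri2]
  have hge : q * g * p = g := aux_uniq hinv hinv1 hinv2
  have hgidem : g * g = g := by rw [← hge]; exact hidem
  have h1 : inv g = p * q := by rw [hg]; exact aux_inv_inv hinv (p * q)
  have h2 : inv g = g := aux_idem_inv hinv hgidem
  have hpq : p * q = g := h1.symm.trans h2
  rw [hpq]; exact hgidem

theorem aux_idem_comm (hinv : IsInverseSg Q inv) {p q : Q} (hp : p * p = p) (hq : q * q = q) :
    p * q = q * p := by
  have h1 := aux_idem_mul hinv hp hq
  have h2 := aux_idem_mul hinv hq hp
  have k1 : (p * q) * (q * p) * (p * q) = p * q := by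
    calc (p * q) * (q * p) * (p * q) = p * ((q * q) * ((p * p) * q)) := by simp only [mul_assoc]
      _ = p * (q * (p * q)) := by rw [hq, hp]
      _ = (p * q) * (p * q) := by simp only [mul_assoc]
      _ = p * q := h1
  have k2 : (q * p) * (p * q) * (q * p) = q * p := by
    calc (q * p) * (p * q) * (q * p) = q * ((p * p) * ((q * q) * p)) := by simp only [mul_assoc]
      _ = q * (p * (q * p)) := by rw [hp, hq]
      _ = (q * p) * (q * p) := by simp only [mul_assoc]
      _ = q * p := h2
  have e1 : q * p = inv (p * q) := aux_uniq hinv k1 k2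
  have e2 : p * q = inv (p * q) := aux_uniq hinv (by rw [h1, h1]) (by rw [h1, h1])
  exact e2.trans e1.symm

theorem aux_inv_mul (hinv : IsInverseSg Q inv) (a b : Q) : inv (a * b) = inv b * inv a := by
  have hcomm : (b * inv b) * (inv a * a) = (inv a * a) * (b * inv b) :=
    aux_idem_comm hinv (aux_mii hinv b) (aux_imi hinv a)
  have h1 : (a * b) * (inv b * inv a) * (a * b) = a * b := by
    calc (a * b) * (inv b * inv a) * (a * b)
        = a * ((b * inv b) * (inv a * a)) * b := by simp only [mul_assoc]
      _ = a * ((inv a * a) * (b * inv b)) * b := by rw [hcomm]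
      _ = (a * inv a * a) * (b * inv b * b) := by simp only [mul_assoc]
      _ = a * b := by rw [aux_tri hinv a, aux_tri hinv b]
  have h2 : (inv b * inv a) * (a * b) * (inv b * inv a) = inv b * inv a := by
    calc (inv b * inv a) * (a * b) * (inv b * inv a)
        = inv b * ((inv a * a) * (b * inv b)) * inv a := by simp only [mul_assoc]
      _ = inv b * ((b * inv b) * (inv a * a)) * inv a := by rw [hcomm]
      _ = (inv b * b * inv b) * (inv a * a * inv a) := by simp only [mul_assoc]
      _ = inv b * inv a := by rw [aux_tri' hinv a, aux_tri' hinv b]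
  exact (aux_uniq hinv h1 h2).symm

theorem aux_greenR (hinv : IsInverseSg Q inv) {c d : Q} (h : c * inv c = d * inv d) :
    GreenR c d := by
  refine Or.inr ⟨inv c * d, inv d * c, ?_, ?_⟩
  · calc c * (inv c * d) = (c * inv c) * d := (mul_assoc _ _ _).symm
      _ = (d * inv d) * d := by rw [h]
      _ = d := aux_tri hinv d
  · calc d * (inv d * c) = (d * inv d) * c := (mul_assoc _ _ _).symm
      _ = (c * inv c) * c := by rw [h]
      _ = c := aux_tri hinv c

theorem aux_greenR_symm {a b : Q} (h : GreenR a b) : GreenR b a := by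
  rcases h with rfl | ⟨x, y, h1, h2⟩
  · exact Or.inl rfl
  · exact Or.inr ⟨y, x, h2, h1⟩

theorem aux_chain {e : ℕ → Q} (hchain : IsOmegaChain Q e) :
    ∀ m n, m ≤ n → e m * e n = e n ∧ e n * e m = e n := by
  intro m n h
  induction n, h using Nat.le_induction with
  | base => exact ⟨hchain.1 m, hchain.1 m⟩
  | succ n hmn ih =>
    obtain ⟨h1, h2⟩ := hchain.2.2.1 n
    constructor
    · calc e m * e (n + 1) = e m * (e n * e (n + 1)) := by rw [h2]
        _ = (e m * e n) * e (n + 1) := (mul_assoc _ _ _).symm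
        _ = e n * e (n + 1) := by rw [ih.1]
        _ = e (n + 1) := h2
    · calc e (n + 1) * e m = (e (n + 1) * e n) * e m := by rw [h1]
        _ = e (n + 1) * (e n * e m) := mul_assoc _ _ _
        _ = e (n + 1) * e n := by rw [ih.2]
        _ = e (n + 1) := h1

theorem aux_comparable {e : ℕ → Q} (hchain : IsOmegaChain Q e) {p q : Q}
    (hp : p * p = p) (hq : q * q = q) : p * q = p ∨ p * q = q := by
  obtain ⟨m, rfl⟩ := hchain.2.1 p hp
  obtain ⟨n, rfl⟩ := hchain.2.1 q hq
  rcases le_total m n with h | h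
  · exact Or.inr (aux_chain hchain m n h).1
  · exact Or.inl (aux_chain hchain n m h).2

/-- Key computation: if `bb⁻¹ = x⁻¹y = y⁻¹x`, `xx⁻¹ ≤ yy⁻¹` and `bb⁻¹ ≤ aa⁻¹`, then
`(xa, yb)` is a straight representation of `a⁻¹b`. -/
theorem aux_key (hinv : IsInverseSg Q inv) (a b x y : Q)
    (hf1 : b * inv b = inv x * y)
    (hf2 : b * inv b = inv y * x)
    (hxy : (x * inv x) * (y * inv y) = x * inv x)
    (hle : (b * inv b) * (a * inv a) = b * inv b) :
    (x * a) * inv (x * a) = (y * b) * inv (y * b) ∧ inv (x * a) * (y * b) = inv a * b := by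
  have hff : (b * inv b) * (b * inv b) = b * inv b := aux_mii hinv b
  have hxx : inv x * x = b * inv b := by
    calc inv x * x = inv x * ((x * inv x) * (y * inv y)) * x := by
          rw [hxy, mul_assoc (inv x) (x * inv x) x, aux_tri hinv x]
      _ = (inv x * x * inv x) * (y * (inv y * x)) := by simp only [mul_assoc]
      _ = inv x * (y * (inv y * x)) := by rw [aux_tri' hinv x]
      _ = (inv x * y) * (inv y * x) := by simp only [mul_assoc]
      _ = (b * inv b) * (b * inv b) := by rw [← hf1, ← hf2]
      _ = b * inv b := hff
  have hyx : (y * inv y) * x = x := by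
    calc (y * inv y) * x = (y * inv y) * ((x * inv x) * x) := by rw [aux_tri hinv x]
      _ = ((y * inv y) * (x * inv x)) * x := by simp only [mul_assoc]
      _ = ((x * inv x) * (y * inv y)) * x := by
          rw [aux_idem_comm hinv (aux_mii hinv y) (aux_mii hinv x)]
      _ = (x * inv x) * x := by rw [hxy]
      _ = x := aux_tri hinv x
  have hyf : y * (b * inv b) = x := by
    calc y * (b * inv b) = y * (inv y * x) := by rw [hf2]
      _ = (y * inv y) * x := by simp only [mul_assoc]
      _ = x := hyx
  have hinvx : inv x = (b * inv b) * inv y := by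
    rw [← hyf, aux_inv_mul hinv y (b * inv b), aux_idem_inv hinv hff]
  have hx_eq : x * inv x = y * (b * inv b) * inv y := by
    calc x * inv x = (y * (b * inv b)) * ((b * inv b) * inv y) :=
          congrArg₂ (· * ·) hyf.symm hinvx
      _ = y * ((b * inv b) * (b * inv b)) * inv y := by simp only [mul_assoc]
      _ = y * (b * inv b) * inv y := by rw [hff]
  constructor
  · calc (x * a) * inv (x * a) = (x * a) * (inv a * inv x) := by rw [aux_inv_mul hinv x a]
      _ = x * (a * inv a) * inv x := by simp only [mul_assoc]
      _ = (x * inv x * x) * (a * inv a) * inv x := by rw [aux_tri hinv x]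
      _ = x * ((inv x * x) * (a * inv a)) * inv x := by simp only [mul_assoc]
      _ = x * ((b * inv b) * (a * inv a)) * inv x := by rw [hxx]
      _ = x * (b * inv b) * inv x := by rw [hle]
      _ = x * (inv x * x) * inv x := by rw [← hxx]
      _ = (x * inv x) * (x * inv x) := by simp only [mul_assoc]
      _ = x * inv x := aux_mii hinv x
      _ = y * (b * inv b) * inv y := hx_eq
      _ = (y * b) * (inv b * inv y) := by simp only [mul_assoc]
      _ = (y * b) * inv (y * b) := by rw [aux_inv_mul hinv y b]
  · calc inv (x * a) * (y * b) = (inv a * inv x) * (y * b) := by rw [aux_inv_mul hinv x a]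
      _ = inv a * ((inv x * y) * b) := by simp only [mul_assoc]
      _ = inv a * ((b * inv b) * b) := by rw [← hf1]
      _ = inv a * b := by rw [aux_tri hinv b]

theorem aux_main {e : ℕ → Q} (hinv : IsInverseSg Q inv) (hchain : IsOmegaChain Q e)
    (S : Subsemigroup Q) (hS : IsLeftIOrder inv (S : Set Q)) (a b : Q)
    (ha : a ∈ S) (hb : b ∈ S) (hle : (b * inv b) * (a * inv a) = b * inv b) :
    ∃ c ∈ S, ∃ d ∈ S, inv a * b = inv c * d ∧ GreenR c d := by
  obtain ⟨x, hx, y, hy, hf1⟩ := hS (b * inv b)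
  have hff : (b * inv b) * (b * inv b) = b * inv b := aux_mii hinv b
  have hf2 : b * inv b = inv y * x := by
    calc b * inv b = inv (b * inv b) := (aux_idem_inv hinv hff).symm
      _ = inv (inv x * y) := by rw [hf1]
      _ = inv y * inv (inv x) := aux_inv_mul hinv (inv x) y
      _ = inv y * x := by rw [aux_inv_inv hinv x]
  rcases aux_comparable hchain (aux_mii hinv x) (aux_mii hinv y) with h | h
  · obtain ⟨hR, hrep⟩ := aux_key hinv a b x y hf1 hf2 h hle
    exact ⟨x * a, S.mul_mem hx ha, y * b, S.mul_mem hy hb, hrep.symm, aux_greenR hinv hR⟩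
  · have h' : (y * inv y) * (x * inv x) = y * inv y :=
      (aux_idem_comm hinv (aux_mii hinv y) (aux_mii hinv x)).trans h
    obtain ⟨hR, hrep⟩ := aux_key hinv a b y x hf2 hf1 h' hle
    exact ⟨y * a, S.mul_mem hy ha, x * b, S.mul_mem hx hb, hrep.symm, aux_greenR hinv hR⟩

end Aux

/-- A left I-order in a bisimple inverse ω-semigroup is straight. -/
theorem stmt1 {Q : Type*} [Semigroup Q] (inv : Q → Q) (e : ℕ → Q)
    (hinv : IsInverseSg Q inv) (hbis : IsBisimple Q) (hchain : IsOmegaChain Q e)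
    (S : Subsemigroup Q) (hS : IsLeftIOrder inv (S : Set Q)) :
    ∀ q : Q, ∃ a ∈ S, ∃ b ∈ S, q = inv a * b ∧ GreenR a b := by
  intro q
  obtain ⟨a, ha, b, hb, hq⟩ := hS q
  rcases aux_comparable hchain (aux_mii hinv b) (aux_mii hinv a) with h | h
  · obtain ⟨c, hc, d, hd, heq, hR⟩ := aux_main hinv hchain S hS a b ha hb h
    exact ⟨c, hc, d, hd, hq.trans heq, hR⟩
  · have h' : (a * inv a) * (b * inv b) = a * inv a :=
      (aux_idem_comm hinv (aux_mii hinv a) (aux_mii hinv b)).trans h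
    obtain ⟨c, hc, d, hd, heq, hR⟩ := aux_main hinv hchain S hS b a hb ha h'
    have h2 : inv a * b = inv d * c := by
      calc inv a * b = inv a * inv (inv b) := by rw [aux_inv_inv hinv b]
        _ = inv (inv b * a) := (aux_inv_mul hinv (inv b) a).symm
        _ = inv (inv c * d) := by rw [heq]
        _ = inv d * inv (inv c) := aux_inv_mul hinv (inv c) d
        _ = inv d * c := by rw [aux_inv_inv hinv c]
    exact ⟨d, hd, c, hc, hq.trans h2, aux_greenR_symm hR⟩
end

section
/- Let S be a semigroup satisfying conditions (A), (B), (C). Suppose (a₁,b₁) ~ (a₂,b₂) and (c₁,d₁) ~ (c₂,d₂) in Σ. Suppose x, y ∈ S satisfy xb₁ = yc₁, r(x) = r(y), l(x) = r(b₁) − l(b₁) + max(l(b₁), l(c₁)), l(y) = r(c₁) − l(c₁) + max(l(b₁), l(c₁)), and x̄, ȳ ∈ S satisfy x̄b₂ = ȳc₂, r(x̄) = r(ȳ), l(x̄) = r(b₂) − l(b₂) + max(l(b₂), l(c₂)), l(ȳ) = r(c₂) − l(c₂) + max(l(b₂), l(c₂)). Then (xa₁, yd₁) ~ (x̄a₂,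 ȳd₂); hence the multiplication [a,b][c,d] = [xa, yd] on the set Q of ~-classes is well defined. -/
/-- The bicyclic semigroup `𝓑` carried by `ℕ × ℕ`, an element being `(r, l)`;
`(m,n)(p,q) = (m - n + t, q - p + t)` with `t = max n p`. -/
structure Bicyclic where
  r : ℕ
  l : ℕ

instance : Mul Bicyclic :=
  ⟨fun x y => ⟨x.r + (max x.l y.r - x.l), y.l + (max x.l y.r - y.r)⟩⟩

/-- The inverse `(m,n)⁻¹ = (n,m)` in the bicyclic semigroup. -/
def Bicyclic.inv (x : Bicyclic) : Bicyclic := ⟨x.l, x.r⟩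

/-- `T` is a left I-order in the bicyclic semigroup `𝓑`. -/
def IsLeftIOrderBic (T : Set Bicyclic) : Prop :=
  ∀ q : Bicyclic, ∃ a ∈ T, ∃ b ∈ T, q = a.inv * b

/-- `r a`, the first coordinate of `φ a` in `𝓑`. -/
def rr {S : Type*} [Mul S] (φ : S →ₙ* Bicyclic) (a : S) : ℕ := (φ a).r

/-- `l a`, the second coordinate of `φ a` in `𝓑`. -/
def ll {S : Type*} [Mul S] (φ : S →ₙ* Bicyclic) (a : S) : ℕ := (φ a).l

/-- Condition (A): the image of `φ` is a left I-order in `𝓑`. -/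
def CondA {S : Type*} [Mul S] (φ : S →ₙ* Bicyclic) : Prop :=
  IsLeftIOrderBic (Set.range (⇑φ))

/-- Condition (B)(i): if `l x, l y ≥ r a` and `x * a = y * a` then `x = y`. -/
def CondBi {S : Type*} [Mul S] (φ : S →ₙ* Bicyclic) : Prop :=
  ∀ x y a : S, rr φ a ≤ ll φ x → rr φ a ≤ ll φ y → x * a = y * a → x = y

/-- Condition (B)(ii): if `r x, r y ≥ l a` and `a * x = a * y` then `x = y`. -/
def CondBii {S : Type*} [Mul S] (φ : S →ₙ* Bicyclic) : Prop :=
  ∀ x y a : S, ll φ a ≤ rr φ x → ll φ a ≤ rr φ y → a * x = a * y → x = y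

/-- Condition (C): for all `b c` there are `x y` with `x * b = y * c`,
`r x = r y`, `l x = r b - l b + max (l b) (l c)` and
`l y = r c - l c + max (l b) (l c)`. -/
def CondC {S : Type*} [Mul S] (φ : S →ₙ* Bicyclic) : Prop :=
  ∀ b c : S, ∃ x y : S, x * b = y * c ∧ rr φ x = rr φ y ∧
    ll φ x = rr φ b + (max (ll φ b) (ll φ c) - ll φ b) ∧
    ll φ y = rr φ c + (max (ll φ b) (ll φ c) - ll φ c)

/-- `Σ = {(a,b) ∈ S × S : r a = r b}`. -/
abbrev Sig {S : Type*} [Mul S] (φ : S →ₙ* Bicyclic) : Type _ :=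
  {p : S × S // rr φ p.1 = rr φ p.2}

/-- The relation `∼` on pairs: `(a,b) ∼ (c,d)` iff there are `x y` with
`x * a = y * c`, `x * b = y * d`, `l x = r a`, `l y = r c`, `r x = r y`. -/
def simP {S : Type*} [Mul S] (φ : S →ₙ* Bicyclic) (p q : S × S) : Prop :=
  ∃ x y : S, x * p.1 = y * q.1 ∧ x * p.2 = y * q.2 ∧
    ll φ x = rr φ p.1 ∧ ll φ y = rr φ q.1 ∧ rr φ x = rr φ y

/-- The relation `∼` on `Σ`. -/
def sim {S : Type*} [Mul S] (φ : S →ₙ* Bicyclic) (p q : Sig φ) : Prop :=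
  simP φ p.1 q.1

section Aux
variable {S : Type*} [Semigroup S] (φ : S →ₙ* Bicyclic)

lemma rr_mul (a b : S) :
    rr φ (a * b) = rr φ a + (max (ll φ a) (rr φ b) - ll φ a) := by
  simp only [rr, ll, map_mul]; rfl

lemma ll_mul (a b : S) :
    ll φ (a * b) = ll φ b + (max (ll φ a) (rr φ b) - rr φ b) := by
  simp only [rr, ll, map_mul]; rfl

lemma rr_mul_of_ge (a b : S) (h : rr φ b ≤ ll φ a) : rr φ (a * b) = rr φ a := by
  rw [rr_mul, max_eq_left h]; omega

lemma ll_mul_of_ge (a b : S) (h : rr φ b ≤ ll φ a) :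
    ll φ (a * b) = ll φ b + (ll φ a - rr φ b) := by
  rw [ll_mul, max_eq_left h]

lemma rr_le_rr_mul (a b : S) : rr φ a ≤ rr φ (a * b) := by
  rw [rr_mul]; omega

/-- Key cancellation lemma: if `(a,b) ∼ (c,d)` via witnesses `s, t`, and `X, Y`
satisfy `X*a = Y*c` with matching degree data (shifted by a common `e`), then
also `X*b = Y*d`. -/
lemma key_lemma (hBi : CondBi φ) (hBii : CondBii φ) (hC : CondC φ)
    (a b c d s t X Y : S) (e : ℕ)
    (h1 : s * a = t * c) (h2 : s * b = t * d)
    (h3 : ll φ s = rr φ a) (h4 : ll φ t = rr φ c) (h5 : rr φ s = rr φ t)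
    (h6 : X * a = Y * c) (h7 : rr φ X = rr φ Y)
    (h8 : ll φ X = rr φ a + e) (h9 : ll φ Y = rr φ c + e) :
    X * b = Y * d := by
  obtain ⟨k, k', hk, hrk, hlk, hlk'⟩ := hC s X
  have hmax : max (ll φ s) (ll φ X) = rr φ a + e := by
    rw [h3, h8]; exact max_eq_right (Nat.le_add_right _ _)
  have hlk2 : ll φ k = rr φ s + e := by rw [hlk, hmax, h3]; omega
  have hlk'2 : ll φ k' = rr φ X := by rw [hlk', hmax, h8]; omega
  have e1 : (k * t) * c = (k' * Y) * c := by
    have h0 : k * (s * a) = k' * (X * a) := by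
      rw [← mul_assoc, ← mul_assoc, hk]
    rw [h1, h6] at h0
    rw [mul_assoc, mul_assoc]; exact h0
  have hkt : k * t = k' * Y := by
    refine hBi _ _ c ?_ ?_ e1
    · rw [ll_mul_of_ge φ _ _ (by omega), h4, hlk2]; omega
    · rw [ll_mul_of_ge φ _ _ (by omega), h9]; omega
  have e2 : k' * (X * b) = k' * (Y * d) := by
    calc k' * (X * b) = (k' * X) * b := (mul_assoc _ _ _).symm
      _ = (k * s) * b := by rw [hk]
      _ = k * (s * b) := mul_assoc _ _ _
      _ = k * (t * d) := by rw [h2]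
      _ = (k * t) * d := (mul_assoc _ _ _).symm
      _ = (k' * Y) * d := by rw [hkt]
      _ = k' * (Y * d) := mul_assoc _ _ _
  refine hBii _ _ k' ?_ ?_ e2
  · rw [hlk'2]; exact rr_le_rr_mul φ _ _
  · rw [hlk'2, h7]; exact rr_le_rr_mul φ _ _

end Aux

/-- Well-definedness of the multiplication: equivalent representatives with
condition-(C) witnesses give `∼`-equivalent products. -/
theorem stmt8 {S : Type*} [Semigroup S] (φ : S →ₙ* Bicyclic)
    (hA : CondA φ) (hBi : CondBi φ) (hBii : CondBii φ) (hC : CondC φ)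
    (a₁ b₁ a₂ b₂ c₁ d₁ c₂ d₂ x y x' y' : S)
    (h₁ : rr φ a₁ = rr φ b₁) (h₂ : rr φ a₂ = rr φ b₂)
    (h₃ : rr φ c₁ = rr φ d₁) (h₄ : rr φ c₂ = rr φ d₂)
    (hab : simP φ (a₁, b₁) (a₂, b₂)) (hcd : simP φ (c₁, d₁) (c₂, d₂))
    (hxy : x * b₁ = y * c₁) (hrxy : rr φ x = rr φ y)
    (hlx : ll φ x = rr φ b₁ + (max (ll φ b₁) (ll φ c₁) - ll φ b₁))
    (hly : ll φ y = rr φ c₁ + (max (ll φ b₁) (ll φ c₁) - ll φ c₁))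
    (hxy' : x' * b₂ = y' * c₂) (hrxy' : rr φ x' = rr φ y')
    (hlx' : ll φ x' = rr φ b₂ + (max (ll φ b₂) (ll φ c₂) - ll φ b₂))
    (hly' : ll φ y' = rr φ c₂ + (max (ll φ b₂) (ll φ c₂) - ll φ c₂)) :
    simP φ (x * a₁, y * d₁) (x' * a₂, y' * d₂) := by
  obtain ⟨s, t, hsa, hsb, hls, hlt, hrst⟩ := hab
  obtain ⟨p, q, hpc, hpd, hlp, hlq, hrpq⟩ := hcd
  simp only at hsa hsb hls hlt hpc hpd hlp hlq
  -- degrees of the two sides agree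
  have hb12 : ll φ b₁ = ll φ b₂ := by
    have h := congrArg (ll φ) hsb
    rw [ll_mul_of_ge φ s b₁ (by omega), ll_mul_of_ge φ t b₂ (by omega)] at h
    omega
  have hc12 : ll φ c₁ = ll φ c₂ := by
    have h := congrArg (ll φ) hpc
    rw [ll_mul_of_ge φ p c₁ (by omega), ll_mul_of_ge φ q c₂ (by omega)] at h
    omega
  have hMb : ll φ b₁ ≤ max (ll φ b₁) (ll φ c₁) := le_max_left _ _
  have hMc : ll φ c₁ ≤ max (ll φ b₁) (ll φ c₁) := le_max_right _ _
  have hM : max (ll φ b₁) (ll φ c₁) = max (ll φ b₂) (ll φ c₂) := by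
    rw [hb12, hc12]
  -- combine the condition-(C) witnesses
  obtain ⟨u₀, w₀, huw, hruw, hlu₀, hlw₀⟩ := hC x s
  obtain ⟨u₀', w₀', huw', hruw', hlu₀', hlw₀'⟩ := hC x' t
  have hmx : max (ll φ x) (ll φ s) = ll φ x := max_eq_left (by omega)
  have hmx' : max (ll φ x') (ll φ t) = ll φ x' := max_eq_left (by omega)
  rw [hmx] at hlu₀ hlw₀
  rw [hmx'] at hlu₀' hlw₀'
  have hlu₀2 : ll φ u₀ = rr φ x := by omega
  have hlu₀'2 : ll φ u₀' = rr φ x' := by omega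
  have hlww : ll φ w₀ = ll φ w₀' := by omega
  obtain ⟨g, g', hg, hrg, hlg, hlg'⟩ := hC w₀ w₀'
  rw [hlww, max_self] at hlg hlg'
  have hlg2 : ll φ g = rr φ u₀ := by omega
  have hlg'2 : ll φ g' = rr φ u₀' := by omega
  set u := g * u₀ with hu
  set v := g' * u₀' with hv
  have hlu : ll φ u = rr φ x := by
    rw [hu, ll_mul_of_ge φ _ _ (by omega), hlu₀2]; omega
  have hlv : ll φ v = rr φ x' := by
    rw [hv, ll_mul_of_ge φ _ _ (by omega), hlu₀'2]; omega
  have hru : rr φ u = rr φ g := by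
    rw [hu, rr_mul_of_ge φ _ _ (by omega)]
  have hrv : rr φ v = rr φ g' := by
    rw [hv, rr_mul_of_ge φ _ _ (by omega)]
  have hruv : rr φ u = rr φ v := by omega
  -- the first product equality
  have E1 : (u * x) * a₁ = (v * x') * a₂ := by
    have e1 : g * ((u₀ * x) * a₁) = g * ((w₀ * s) * a₁) := by rw [huw]
    have e2 : g' * ((u₀' * x') * a₂) = g' * ((w₀' * t) * a₂) := by rw [huw']
    have e3 : (g * w₀) * (s * a₁) = (g' * w₀') * (t * a₂) := by rw [hg, hsa]
    rw [hu, hv]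
    simp only [mul_assoc] at e1 e2 e3 ⊢
    rw [e1, e3, ← e2]
  -- degree data for `u*x`, `v*x'`
  have hruX : rr φ (u * x) = rr φ u := rr_mul_of_ge φ _ _ (by omega)
  have hrvX : rr φ (v * x') = rr φ v := rr_mul_of_ge φ _ _ (by omega)
  have hluX : ll φ (u * x) = ll φ x := by
    rw [ll_mul_of_ge φ _ _ (by omega), hlu]; omega
  have hlvX : ll φ (v * x') = ll φ x' := by
    rw [ll_mul_of_ge φ _ _ (by omega), hlv]; omega
  -- first application of the key lemma
  have Eb : (u * x) * b₁ = (v * x') * b₂ := by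
    refine key_lemma φ hBi hBii hC a₁ b₁ a₂ b₂ s t (u * x) (v * x')
      (max (ll φ b₁) (ll φ c₁) - ll φ b₁) hsa hsb hls hlt hrst E1 (by omega)
      (by omega) (by omega)
  -- pass through `x*b₁ = y*c₁`
  have E2 : (u * y) * c₁ = (v * y') * c₂ := by
    calc (u * y) * c₁ = u * (y * c₁) := mul_assoc _ _ _
      _ = u * (x * b₁) := by rw [hxy]
      _ = (u * x) * b₁ := (mul_assoc _ _ _).symm
      _ = (v * x') * b₂ := Eb
      _ = v * (x' * b₂) := mul_assoc _ _ _
      _ = v * (y' * c₂) := by rw [hxy']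
      _ = (v * y') * c₂ := (mul_assoc _ _ _).symm
  -- degree data for `u*y`, `v*y'`
  have hruY : rr φ (u * y) = rr φ u := rr_mul_of_ge φ _ _ (by omega)
  have hrvY : rr φ (v * y') = rr φ v := rr_mul_of_ge φ _ _ (by omega)
  have hluY : ll φ (u * y) = ll φ y := by
    rw [ll_mul_of_ge φ _ _ (by omega), hlu]; omega
  have hlvY : ll φ (v * y') = ll φ y' := by
    rw [ll_mul_of_ge φ _ _ (by omega), hlv]; omega
  -- second application of the key lemma
  have Ed : (u * y) * d₁ = (v * y') * d₂ := by
    refine key_lemma φ hBi hBii hC c₁ d₁ c₂ d₂ p q (u * y) (v * y')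
      (max (ll φ b₁) (ll φ c₁) - ll φ c₁) hpc hpd hlp hlq hrpq E2 (by omega)
      (by omega) (by omega)
  -- assemble the witnesses
  refine ⟨u, v, ?_, ?_, ?_, ?_, ?_⟩
  · simpa only [mul_assoc] using E1
  · simpa only [mul_assoc] using Ed
  · simp only
    rw [rr_mul_of_ge φ _ _ (by omega)]; omega
  · simp only
    rw [rr_mul_of_ge φ _ _ (by omega)]; omega
  · omega
end
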